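/- Let d ≥ 2, let x, y ∈ S^{d−1}, and set η = ⟨x, y⟩. Let F : S^{d−1} → ℝ^d be a bounded measurable map, let R be a random d×d orthogonal matrix distributed according to the Haar probability measure on the orthogonal group O(d), and set x̄ = Rᵀ F(Rx). Assume that ⟨x̄, x⟩ ≠ 0 almost surely and that (‖x̄‖₂² − ⟨x̄, x⟩²)/⟨x̄, x⟩² is integrable. Define the ratio estimator η̂ = ⟨x̄, y⟩ / ⟨x̄, x⟩. Then E[(η̂ − η)²] = ((1 − η²)/(d − 1)) · E[(‖x̄‖₂² − ⟨x̄, x⟩²)/⟨x̄, x⟩²]. -/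

import Mathlib

open MeasureTheory
open scoped RealInnerProductSpace Matrix

instance matrixMeasurableSpace {n : Type*} : MeasurableSpace (Matrix n n ℝ) :=
  (inferInstance : MeasurableSpace (n → n → ℝ))

/-- Action of a matrix `R` on a vector of Euclidean space. -/
noncomputable def matAct {d : ℕ} (R : Matrix (Fin d) (Fin d) ℝ)
    (x : EuclideanSpace ℝ (Fin d)) : EuclideanSpace ℝ (Fin d) :=
  Matrix.toEuclideanLin R x

section Aux

variable {d : ℕ}

lemma matAct_apply (M : Matrix (Fin d) (Fin d) ℝ) (v : EuclideanSpace ℝ (Fin d)) (i : Fin d) :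
    matAct M v i = ∑ j, M i j * v j := rfl

lemma matAct_mul (M N : Matrix (Fin d) (Fin d) ℝ) (v : EuclideanSpace ℝ (Fin d)) :
    matAct (M * N) v = matAct M (matAct N v) := by
  ext i
  simp only [matAct_apply, Matrix.mul_apply, Finset.sum_mul, Finset.mul_sum]
  rw [Finset.sum_comm]
  exact Finset.sum_congr rfl fun a _ => Finset.sum_congr rfl fun b _ => by ring

lemma inner_matAct_transpose (M : Matrix (Fin d) (Fin d) ℝ) (v u : EuclideanSpace ℝ (Fin d)) :
    ⟪matAct Mᵀ v, u⟫ = ⟪v, matAct M u⟫ := by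
  simp only [PiLp.inner_apply, RCLike.inner_apply, starRingEnd_apply, star_trivial,
    matAct_apply, Matrix.transpose_apply, Finset.sum_mul, Finset.mul_sum]
  rw [Finset.sum_comm]
  exact Finset.sum_congr rfl fun i _ => Finset.sum_congr rfl fun j _ => by ring

lemma meas_entry {α : Type*} [MeasurableSpace α] {f : α → Matrix (Fin d) (Fin d) ℝ}
    (hf : Measurable f) (i j : Fin d) : Measurable fun a => f a i j :=
  (measurable_pi_apply j).comp ((measurable_pi_apply i).comp hf)

lemma meas_of_entries {α : Type*} [MeasurableSpace α] {f : α → Matrix (Fin d) (Fin d) ℝ}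
    (hf : ∀ i j, Measurable fun a => f a i j) : Measurable f :=
  measurable_pi_lambda _ fun i => measurable_pi_lambda _ fun j => hf i j

lemma meas_mul_pair : Measurable (fun p : (Matrix.orthogonalGroup (Fin d) ℝ) × (Matrix.orthogonalGroup (Fin d) ℝ) => p.1 * p.2) := by
  apply Measurable.subtype_mk
  apply meas_of_entries
  intro i j
  have : (fun p : (Matrix.orthogonalGroup (Fin d) ℝ) × (Matrix.orthogonalGroup (Fin d) ℝ) =>
      ((p.1 : Matrix (Fin d) (Fin d) ℝ) * (p.2 : Matrix (Fin d) (Fin d) ℝ)) i j) =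
      fun p => ∑ k, (p.1 : Matrix (Fin d) (Fin d) ℝ) i k * (p.2 : Matrix (Fin d) (Fin d) ℝ) k j := by
    funext p; exact Matrix.mul_apply
  rw [this]
  exact Finset.measurable_sum _ fun k _ =>
    (meas_entry (measurable_subtype_coe.comp measurable_fst) i k).mul
    (meas_entry (measurable_subtype_coe.comp measurable_snd) k j)

lemma meas_mul_right (h : Matrix.orthogonalGroup (Fin d) ℝ) :
    Measurable (fun R : Matrix.orthogonalGroup (Fin d) ℝ => R * h) :=
  meas_mul_pair.comp (measurable_id.prodMk measurable_const)

lemma meas_mul_left (g : Matrix.orthogonalGroup (Fin d) ℝ) :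
    Measurable (fun R : Matrix.orthogonalGroup (Fin d) ℝ => g * R) :=
  meas_mul_pair.comp (measurable_const.prodMk measurable_id)

lemma coe_inv_eq_transpose (R : Matrix.orthogonalGroup (Fin d) ℝ) :
    ((R⁻¹ : Matrix.orthogonalGroup (Fin d) ℝ) : Matrix (Fin d) (Fin d) ℝ) =
      (R : Matrix (Fin d) (Fin d) ℝ)ᵀ := by
  rw [← Unitary.star_eq_inv, Unitary.coe_star, Matrix.star_eq_conjTranspose,
    Matrix.conjTranspose_eq_transpose_of_trivial]

lemma meas_inv : Measurable (fun R : Matrix.orthogonalGroup (Fin d) ℝ => R⁻¹) := by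
  apply Measurable.subtype_mk
  have : (fun R : Matrix.orthogonalGroup (Fin d) ℝ => ((R⁻¹ : _) : Matrix (Fin d) (Fin d) ℝ)) =
      fun R : Matrix.orthogonalGroup (Fin d) ℝ => (R : Matrix (Fin d) (Fin d) ℝ)ᵀ := by
    funext R; exact coe_inv_eq_transpose R
  exact this ▸ (meas_of_entries fun i j => meas_entry measurable_subtype_coe j i)

set_option synthInstance.maxHeartbeats 1000000 in
lemma right_invariant (μ : Measure (Matrix.orthogonalGroup (Fin d) ℝ))
    [IsProbabilityMeasure μ]
    (hHaar : ∀ g : Matrix.orthogonalGroup (Fin d) ℝ,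
      Measure.map (fun R => g * R) μ = μ)
    (h : Matrix.orthogonalGroup (Fin d) ℝ) :
    Measure.map (fun R => R * h) μ = μ := by
  set ν := μ.map (fun R => R⁻¹) with hν
  have hνprob : IsProbabilityMeasure ν := Measure.isProbabilityMeasure_map meas_inv.aemeasurable
  have hνright : ∀ g, ν.map (fun R => R * g) = ν := by
    intro g
    rw [hν, Measure.map_map (meas_mul_right g) meas_inv]
    have : ((fun R => R * g) ∘ fun R : Matrix.orthogonalGroup (Fin d) ℝ => R⁻¹) =
        (fun R => R⁻¹) ∘ (fun R => g⁻¹ * R) := by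
      funext R; simp [Function.comp, mul_inv_rev]
    rw [this, ← Measure.map_map meas_inv (meas_mul_left g⁻¹), hHaar g⁻¹]
  have hkey : μ = ν := by
    ext A hA
    have hind : Measurable (A.indicator (1 : (Matrix.orthogonalGroup (Fin d) ℝ) → ENNReal)) :=
      measurable_const.indicator hA
    calc μ A = ∫⁻ _, μ A ∂ν := by rw [lintegral_const, measure_univ, mul_one]
    _ = ∫⁻ g, ∫⁻ r, A.indicator (1 : (Matrix.orthogonalGroup (Fin d) ℝ) → ENNReal) (g * r) ∂μ ∂ν := by
        refine lintegral_congr fun g => ?_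
        rw [← lintegral_map hind (meas_mul_left g), hHaar g, lintegral_indicator_one hA]
    _ = ∫⁻ r, ∫⁻ g, A.indicator (1 : (Matrix.orthogonalGroup (Fin d) ℝ) → ENNReal) (g * r) ∂ν ∂μ := by
        apply lintegral_lintegral_swap
        exact (hind.comp meas_mul_pair).aemeasurable
    _ = ∫⁻ _, ν A ∂μ := by
        refine lintegral_congr fun r => ?_
        rw [← lintegral_map hind (meas_mul_right r), hνright r, lintegral_indicator_one hA]
    _ = ν A := by rw [lintegral_const, measure_univ, mul_one]
  rw [hkey]
  exact hνright h

noncomputable def basMat (B : OrthonormalBasis (Fin d) ℝ (EuclideanSpace ℝ (Fin d))) :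
    Matrix (Fin d) (Fin d) ℝ := Matrix.of fun i j => B j i

noncomputable def permMat (σ : Equiv.Perm (Fin d)) : Matrix (Fin d) (Fin d) ℝ :=
  Matrix.of fun i j => if i = σ j then 1 else 0

noncomputable def permActMat (B : OrthonormalBasis (Fin d) ℝ (EuclideanSpace ℝ (Fin d)))
    (σ : Equiv.Perm (Fin d)) : Matrix (Fin d) (Fin d) ℝ :=
  basMat B * permMat σ * (basMat B)ᵀ

lemma inner_bas (B : OrthonormalBasis (Fin d) ℝ (EuclideanSpace ℝ (Fin d))) (i j : Fin d) :
    (∑ k, B i k * B j k) = if i = j then (1:ℝ) else 0 := by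
  have := B.orthonormal
  rw [orthonormal_iff_ite] at this
  have h := this i j
  rw [← h]
  simp [PiLp.inner_apply, RCLike.inner_apply]
  exact Finset.sum_congr rfl fun k _ => mul_comm _ _

lemma basMat_transpose_mul (B : OrthonormalBasis (Fin d) ℝ (EuclideanSpace ℝ (Fin d))) :
    (basMat B)ᵀ * basMat B = 1 := by
  ext i j
  simp only [Matrix.mul_apply, Matrix.transpose_apply, basMat, Matrix.of_apply, Matrix.one_apply]
  exact inner_bas B i j

lemma basMat_mul_transpose (B : OrthonormalBasis (Fin d) ℝ (EuclideanSpace ℝ (Fin d))) :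
    basMat B * (basMat B)ᵀ = 1 :=
  mul_eq_one_comm.mp (basMat_transpose_mul B)

lemma permMat_mul_transpose (σ : Equiv.Perm (Fin d)) :
    permMat σ * (permMat σ)ᵀ = 1 := by
  ext i j
  simp only [Matrix.mul_apply, Matrix.transpose_apply, permMat, Matrix.of_apply, Matrix.one_apply]
  rw [Fintype.sum_eq_single (σ.symm i) (fun k hk => ?_)]
  · rcases eq_or_ne i j with h | h
    · subst h; simp
    · simp [h, Ne.symm h]
  · rw [if_neg (fun hik => hk (by rw [hik, Equiv.symm_apply_apply])), zero_mul]

lemma permActMat_mem (B : OrthonormalBasis (Fin d) ℝ (EuclideanSpace ℝ (Fin d)))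
    (σ : Equiv.Perm (Fin d)) : permActMat B σ ∈ Matrix.orthogonalGroup (Fin d) ℝ := by
  rw [Matrix.mem_orthogonalGroup_iff]
  simp only [permActMat, Matrix.transpose_mul, Matrix.transpose_transpose]
  simp only [← Matrix.mul_assoc]
  rw [Matrix.mul_assoc (basMat B * permMat σ) (basMat B)ᵀ (basMat B), basMat_transpose_mul,
    Matrix.mul_one, Matrix.mul_assoc (basMat B) (permMat σ) (permMat σ)ᵀ,
    permMat_mul_transpose, Matrix.mul_one, basMat_mul_transpose]

lemma matAct_permActMat (B : OrthonormalBasis (Fin d) ℝ (EuclideanSpace ℝ (Fin d)))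
    (σ : Equiv.Perm (Fin d)) (j : Fin d) :
    matAct (permActMat B σ) (B j) = B (σ j) := by
  rw [permActMat, matAct_mul, matAct_mul]
  have h1 : matAct (basMat B)ᵀ (B j) = (EuclideanSpace.single j (1:ℝ)) := by
    ext i
    simp only [matAct_apply, Matrix.transpose_apply, basMat, Matrix.of_apply]
    rw [inner_bas B i j]
    simp [EuclideanSpace.single_apply, eq_comm]
  rw [h1]
  have h2 : matAct (permMat σ) (EuclideanSpace.single j (1:ℝ)) = EuclideanSpace.single (σ j) (1:ℝ) := by
    ext i
    simp only [matAct_apply, permMat, Matrix.of_apply, EuclideanSpace.single_apply]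
    rw [Fintype.sum_eq_single j (fun k hk => by rw [if_neg hk, mul_zero])]
    simp
  rw [h2]
  ext i
  simp only [matAct_apply, basMat, Matrix.of_apply, EuclideanSpace.single_apply]
  rw [Fintype.sum_eq_single (σ j) (fun k hk => by rw [if_neg hk, mul_zero])]
  simp

lemma sum_inner_sq (B : OrthonormalBasis (Fin d) ℝ (EuclideanSpace ℝ (Fin d)))
    (v : EuclideanSpace ℝ (Fin d)) :
    ∑ i, ⟪v, B i⟫ ^ 2 = ‖v‖ ^ 2 := by
  have h := B.sum_inner_mul_inner v v
  calc ∑ i, ⟪v, B i⟫ ^ 2 = ∑ i, ⟪v, B i⟫ * ⟪B i, v⟫ := by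
        refine Finset.sum_congr rfl fun i _ => ?_
        rw [real_inner_comm (B i) v]; ring
  _ = ⟪v, v⟫ := h
  _ = ‖v‖ ^ 2 := real_inner_self_eq_norm_sq v

lemma abs_div_le_div {a b c : ℝ} (ha : 0 ≤ a) (hab : a ≤ b) :
    |a / c ^ 2| ≤ |b / c ^ 2| := by
  rcases eq_or_ne c 0 with h | h
  · simp [h]
  · have hc : 0 < c ^ 2 := by positivity
    rw [abs_of_nonneg (div_nonneg ha hc.le), abs_of_nonneg (div_nonneg (ha.trans hab) hc.le)]
    gcongr

end Aux

theorem stmt2 (d : ℕ) (hd : 2 ≤ d)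
    (x y : EuclideanSpace ℝ (Fin d)) (hx : ‖x‖ = 1) (hy : ‖y‖ = 1)
    (F : EuclideanSpace ℝ (Fin d) → EuclideanSpace ℝ (Fin d))
    (hFmeas : Measurable F) (hFbd : ∃ C : ℝ, ∀ v, ‖F v‖ ≤ C)
    -- `μ` is the Haar probability measure on the orthogonal group `O(d)`
    (μ : Measure (Matrix.orthogonalGroup (Fin d) ℝ))
    (hprob : IsProbabilityMeasure μ)
    (hHaar : ∀ g : Matrix.orthogonalGroup (Fin d) ℝ,
      Measure.map (fun R => g * R) μ = μ)
    (xbar : Matrix.orthogonalGroup (Fin d) ℝ → EuclideanSpace ℝ (Fin d))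
    (hxbar : ∀ R : Matrix.orthogonalGroup (Fin d) ℝ,
      xbar R = matAct ((R : Matrix (Fin d) (Fin d) ℝ)ᵀ)
        (F (matAct (R : Matrix (Fin d) (Fin d) ℝ) x)))
    (hnz : ∀ᵐ R ∂μ, ⟪xbar R, x⟫ ≠ 0)
    (hint : Integrable
      (fun R => (‖xbar R‖ ^ 2 - ⟪xbar R, x⟫ ^ 2) / ⟪xbar R, x⟫ ^ 2) μ) :
    ∫ R, (⟪xbar R, y⟫ / ⟪xbar R, x⟫ - ⟪x, y⟫) ^ 2 ∂μ
      = ((1 - ⟪x, y⟫ ^ 2) / ((d : ℝ) - 1)) *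
          ∫ R, (‖xbar R‖ ^ 2 - ⟪xbar R, x⟫ ^ 2) / ⟪xbar R, x⟫ ^ 2 ∂μ := by
  classical
  haveI := hprob
  set η := ⟪x, y⟫ with hηdef
  -- measurability facts
  have hEval : ∀ j : Fin d, Measurable fun v : EuclideanSpace ℝ (Fin d) => v j :=
    fun j => (measurable_pi_apply j).comp (WithLp.measurable_ofLp 2 _)
  have hgx : ∀ v : EuclideanSpace ℝ (Fin d),
      Measurable fun R : Matrix.orthogonalGroup (Fin d) ℝ =>
        matAct (R : Matrix (Fin d) (Fin d) ℝ) v := by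
    intro v
    refine (WithLp.measurable_toLp 2 (Fin d → ℝ)).comp (measurable_pi_lambda (fun (R : Matrix.orthogonalGroup (Fin d) ℝ) (i : Fin d) => matAct (R : Matrix (Fin d) (Fin d) ℝ) v i) ?_)
    intro i
    have : (fun R : Matrix.orthogonalGroup (Fin d) ℝ =>
        matAct (R : Matrix (Fin d) (Fin d) ℝ) v i) =
        fun R : Matrix.orthogonalGroup (Fin d) ℝ =>
          ∑ j, (R : Matrix (Fin d) (Fin d) ℝ) i j * v j := by
      funext R; exact matAct_apply _ _ _
    rw [this]
    exact Finset.measurable_sum _ fun j _ =>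
      (meas_entry measurable_subtype_coe i j).mul measurable_const
  have hinner : ∀ v, Measurable fun R => ⟪xbar R, v⟫ := by
    intro v
    have : (fun R => ⟪xbar R, v⟫) =
        fun R : Matrix.orthogonalGroup (Fin d) ℝ =>
          ∑ j, (F (matAct (R : Matrix (Fin d) (Fin d) ℝ) x)) j *
          (matAct (R : Matrix (Fin d) (Fin d) ℝ) v) j := by
      funext R
      rw [hxbar R, inner_matAct_transpose]
      simp [PiLp.inner_apply, RCLike.inner_apply]
      exact Finset.sum_congr rfl fun k _ => mul_comm _ _
    rw [this]
    exact Finset.measurable_sum _ fun j _ =>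
      ((hEval j).comp (hFmeas.comp (hgx x))).mul ((hEval j).comp (hgx v))
  have hfmeas : ∀ v, Measurable fun R => ⟪xbar R, v⟫ ^ 2 / ⟪xbar R, x⟫ ^ 2 :=
    fun v => ((hinner v).pow_const 2).div ((hinner x).pow_const 2)
  set I : EuclideanSpace ℝ (Fin d) → ℝ :=
    fun v => ∫ R, ⟪xbar R, v⟫ ^ 2 / ⟪xbar R, x⟫ ^ 2 ∂μ with hI
  -- invariance of I under orthogonal maps fixing x
  have key : ∀ M : Matrix.orthogonalGroup (Fin d) ℝ,
      matAct (M : Matrix (Fin d) (Fin d) ℝ) x = x →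
      ∀ v, I v = I (matAct (M : Matrix (Fin d) (Fin d) ℝ) v) := by
    intro M hMx v
    have hxbarM : ∀ R, xbar (R * M) =
        matAct ((M : Matrix (Fin d) (Fin d) ℝ))ᵀ (xbar R) := by
      intro R
      rw [hxbar (R * M), hxbar R]
      have hcoe : ((R * M : Matrix.orthogonalGroup (Fin d) ℝ) : Matrix (Fin d) (Fin d) ℝ)
          = (R : Matrix (Fin d) (Fin d) ℝ) * (M : Matrix (Fin d) (Fin d) ℝ) := rfl
      rw [hcoe, Matrix.transpose_mul, matAct_mul, matAct_mul, hMx]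
    simp only [hI]
    calc (∫ R, ⟪xbar R, v⟫ ^ 2 / ⟪xbar R, x⟫ ^ 2 ∂μ)
        = ∫ R, ⟪xbar R, v⟫ ^ 2 / ⟪xbar R, x⟫ ^ 2
            ∂(Measure.map (fun R => R * M) μ) := by
          rw [right_invariant μ hHaar M]
    _ = ∫ R, ⟪xbar (R * M), v⟫ ^ 2 / ⟪xbar (R * M), x⟫ ^ 2 ∂μ :=
          integral_map (meas_mul_right M).aemeasurable (hfmeas v).aestronglyMeasurable
    _ = ∫ R, ⟪xbar R, matAct (M : Matrix (Fin d) (Fin d) ℝ) v⟫ ^ 2 /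
            ⟪xbar R, x⟫ ^ 2 ∂μ := by
          refine integral_congr_ae (Filter.Eventually.of_forall fun R => ?_)
          simp only [hxbarM R, inner_matAct_transpose, hMx]
  by_cases hη1 : η ^ 2 = 1
  · -- degenerate case : y = η • x
    have hyx : y = η • x := by
      have hfac : (η - 1) * (η + 1) = 0 := by nlinarith [hη1]
      rcases mul_eq_zero.mp hfac with h | h
      · have hη' : η = 1 := by linarith
        have hxy : x = y := (inner_eq_one_iff_of_norm_eq_one hx hy).mp (by rw [← hηdef, hη'])
        rw [hη', one_smul, hxy]
      · have hη' : η = -1 := by linarith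
        have h2 : ⟪x, -y⟫ = 1 := by
          rw [inner_neg_right, ← hηdef, hη']; norm_num
        have hxy : x = -y := (inner_eq_one_iff_of_norm_eq_one hx (by rw [norm_neg, hy])).mp h2
        rw [hη', neg_smul, one_smul, hxy, neg_neg]
    have hLHS : ∫ R, (⟪xbar R, y⟫ / ⟪xbar R, x⟫ - η) ^ 2 ∂μ = 0 := by
      have hz : ∀ᵐ R ∂μ, (⟪xbar R, y⟫ / ⟪xbar R, x⟫ - η) ^ 2 = 0 := by
        filter_upwards [hnz] with R hR
        rw [hyx, real_inner_smul_right, mul_div_assoc, div_self hR, mul_one, sub_self]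
        norm_num
      rw [integral_congr_ae hz, integral_zero]
    rw [hLHS, hη1]
    norm_num
  · -- main case
    have habs : |η| ≤ 1 := by
      have := abs_real_inner_le_norm x y
      rwa [hx, hy, mul_one] at this
    have hη2 : η ^ 2 ≤ 1 := by nlinarith [abs_nonneg η, sq_abs η]
    set w := y - η • x with hwdef
    have hw_inner : ∀ v : EuclideanSpace ℝ (Fin d), ⟪v, w⟫ = ⟪v, y⟫ - η * ⟪v, x⟫ := by
      intro v; rw [hwdef, inner_sub_right, real_inner_smul_right]
    have hxx : ⟪x, x⟫ = 1 := by rw [real_inner_self_eq_norm_sq, hx]; norm_num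
    have hwx : ⟪x, w⟫ = 0 := by rw [hw_inner, hxx, ← hηdef]; ring
    have hyy : ⟪y, y⟫ = 1 := by rw [real_inner_self_eq_norm_sq, hy]; norm_num
    have hwy : ⟪w, y⟫ = 1 - η ^ 2 := by
      rw [hwdef, inner_sub_left, real_inner_smul_left, hyy, ← hηdef]
      ring
    have hwx2 : ⟪w, x⟫ = 0 := by rw [real_inner_comm]; exact hwx
    have hnw2 : ‖w‖ ^ 2 = 1 - η ^ 2 := by
      rw [← real_inner_self_eq_norm_sq, hw_inner w, hwy, hwx2]
      ring
    have hw0 : w ≠ 0 := by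
      intro h
      apply hη1
      rw [h] at hnw2
      simp only [norm_zero] at hnw2
      nlinarith [hnw2]
    have hnw : ‖w‖ ≠ 0 := fun h => hw0 (norm_eq_zero.mp h)
    set u := ‖w‖⁻¹ • w with hudef
    have hu_norm : ‖u‖ = 1 := by
      rw [hudef, norm_smul, norm_inv, norm_norm, inv_mul_cancel₀ hnw]
    have hux : ⟪x, u⟫ = 0 := by rw [hudef, real_inner_smul_right, hwx, mul_zero]
    have huu : ⟪u, u⟫ = 1 := by
      rw [real_inner_self_eq_norm_sq, hu_norm]; norm_num
    let i0 : Fin d := ⟨0, by omega⟩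
    let i1 : Fin d := ⟨1, by omega⟩
    have hi01 : i0 ≠ i1 := by simp [i0, i1, Fin.ext_iff]
    set v0 : Fin d → EuclideanSpace ℝ (Fin d) := fun i => if i = i0 then x else u with hv0
    have hv0i0 : v0 i0 = x := by simp [hv0]
    have hv0i1 : v0 i1 = u := by simp [hv0, Ne.symm hi01]
    have horth : Orthonormal ℝ (({i0, i1} : Set (Fin d)).restrict v0) := by
      rw [orthonormal_iff_ite]
      rintro ⟨i, hi⟩ ⟨j, hj⟩
      show ⟪v0 i, v0 j⟫ = _
      have hi' : i = i0 ∨ i = i1 := by simpa [Set.mem_insert_iff] using hi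
      have hj' : j = i0 ∨ j = i1 := by simpa [Set.mem_insert_iff] using hj
      rcases hi' with rfl | rfl <;> rcases hj' with rfl | rfl
      · rw [hv0i0, if_pos (Subtype.ext rfl)]; exact hxx
      · rw [hv0i0, hv0i1, if_neg (fun hc => hi01 (Subtype.mk_eq_mk.mp hc))]; exact hux
      · rw [hv0i0, hv0i1, if_neg (fun hc => hi01 (Subtype.mk_eq_mk.mp hc).symm)]
        rw [real_inner_comm]; exact hux
      · rw [hv0i1, if_pos (Subtype.ext rfl)]; exact huu
    obtain ⟨B, hB⟩ := horth.exists_orthonormalBasis_extension_of_card_eq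
      (by simp [finrank_euclideanSpace_fin])
    have hBx : B i0 = x := by rw [hB i0 (by simp)]; exact hv0i0
    have hBu : B i1 = u := by rw [hB i1 (by simp)]; exact hv0i1
    have hpars : ∀ R, ⟪xbar R, x⟫ ^ 2 + ∑ j ∈ Finset.univ.erase i0, ⟪xbar R, B j⟫ ^ 2
        = ‖xbar R‖ ^ 2 := by
      intro R
      have h2 : ⟪xbar R, B i0⟫ ^ 2 + ∑ j ∈ Finset.univ.erase i0, ⟪xbar R, B j⟫ ^ 2
          = ‖xbar R‖ ^ 2 := by
        rw [Finset.add_sum_erase Finset.univ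
          (fun j => (⟪xbar R, B j⟫ : ℝ) ^ 2) (Finset.mem_univ i0)]
        exact sum_inner_sq B (xbar R)
      rwa [hBx] at h2
    have hbound : ∀ i, i ≠ i0 → ∀ R,
        ⟪xbar R, B i⟫ ^ 2 ≤ ‖xbar R‖ ^ 2 - ⟪xbar R, x⟫ ^ 2 := by
      intro i hi R
      have h2 := hpars R
      have hle : ⟪xbar R, B i⟫ ^ 2 ≤ ∑ j ∈ Finset.univ.erase i0, ⟪xbar R, B j⟫ ^ 2 :=
        Finset.single_le_sum (f := fun j => (⟪xbar R, B j⟫ : ℝ) ^ 2)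
          (fun j _ => sq_nonneg _)
          (Finset.mem_erase.mpr ⟨hi, Finset.mem_univ i⟩)
      linarith
    have hgint : ∀ i, i ≠ i0 →
        Integrable (fun R => ⟪xbar R, B i⟫ ^ 2 / ⟪xbar R, x⟫ ^ 2) μ := by
      intro i hi
      refine hint.mono (hfmeas (B i)).aestronglyMeasurable
        (Filter.Eventually.of_forall fun R => ?_)
      simp only [Real.norm_eq_abs]
      exact abs_div_le_div (sq_nonneg _) (hbound i hi R)
    have hsum : ∑ i ∈ Finset.univ.erase i0, I (B i)
        = ∫ R, (‖xbar R‖ ^ 2 - ⟪xbar R, x⟫ ^ 2) / ⟪xbar R, x⟫ ^ 2 ∂μ := by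
      simp only [hI]
      rw [← integral_finset_sum _ (fun i hi => hgint i (Finset.mem_erase.mp hi).1)]
      refine integral_congr_ae (Filter.Eventually.of_forall fun R => ?_)
      show (∑ i ∈ Finset.univ.erase i0, ⟪xbar R, B i⟫ ^ 2 / ⟪xbar R, x⟫ ^ 2)
          = (‖xbar R‖ ^ 2 - ⟪xbar R, x⟫ ^ 2) / ⟪xbar R, x⟫ ^ 2
      rw [← Finset.sum_div (Finset.univ.erase i0)
        (fun j => (⟪xbar R, B j⟫ : ℝ) ^ 2) (⟪xbar R, x⟫ ^ 2)]
      congr 1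
      have h2 := hpars R
      linarith
    have heq : ∀ i, i ≠ i0 → I (B i) = I u := by
      intro i hi
      rcases eq_or_ne i i1 with h | h
      · rw [h, hBu]
      · set σ := Equiv.swap i1 i with hσ
        have hσ0 : σ i0 = i0 := Equiv.swap_apply_of_ne_of_ne hi01 (Ne.symm hi)
        have hσ1 : σ i1 = i := Equiv.swap_apply_left i1 i
        let M : Matrix.orthogonalGroup (Fin d) ℝ := ⟨permActMat B σ, permActMat_mem B σ⟩
        have hMc : (M : Matrix (Fin d) (Fin d) ℝ) = permActMat B σ := rfl
        have hMx : matAct (M : Matrix (Fin d) (Fin d) ℝ) x = x := by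
          rw [hMc, ← hBx, matAct_permActMat, hσ0]
        have hMu : matAct (M : Matrix (Fin d) (Fin d) ℝ) u = B i := by
          rw [hMc, ← hBu, matAct_permActMat, hσ1]
        rw [← hMu]
        exact (key M hMx u).symm
    have hcard : (Finset.univ.erase i0).card = d - 1 := by
      rw [Finset.card_erase_of_mem (Finset.mem_univ i0), Finset.card_univ, Fintype.card_fin]
    have hsum2 : ∑ i ∈ Finset.univ.erase i0, I (B i) = ((d : ℝ) - 1) * I u := by
      rw [Finset.sum_congr rfl (fun i hi => heq i (Finset.mem_erase.mp hi).1),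
        Finset.sum_const, hcard, nsmul_eq_mul]
      congr 1
      rw [Nat.cast_sub (by omega), Nat.cast_one]
    have hJ : (∫ R, (‖xbar R‖ ^ 2 - ⟪xbar R, x⟫ ^ 2) / ⟪xbar R, x⟫ ^ 2 ∂μ)
        = ((d : ℝ) - 1) * I u := by
      rw [← hsum, hsum2]
    have hwu : w = ‖w‖ • u := by
      rw [hudef, smul_smul, mul_inv_cancel₀ hnw, one_smul]
    have hLHS : ∫ R, (⟪xbar R, y⟫ / ⟪xbar R, x⟫ - η) ^ 2 ∂μ = (1 - η ^ 2) * I u := by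
      have h1 : ∀ᵐ R ∂μ, (⟪xbar R, y⟫ / ⟪xbar R, x⟫ - η) ^ 2
          = (1 - η ^ 2) * (⟪xbar R, u⟫ ^ 2 / ⟪xbar R, x⟫ ^ 2) := by
        filter_upwards [hnz] with R hR
        have hstep : ⟪xbar R, y⟫ / ⟪xbar R, x⟫ - η = ⟪xbar R, w⟫ / ⟪xbar R, x⟫ := by
          rw [hw_inner, div_sub' hR]
          ring_nf
        rw [hstep, hwu, real_inner_smul_right, div_pow, mul_pow, ← hnw2]
        ring
      rw [integral_congr_ae h1, integral_const_mul]
    have hd1 : (d : ℝ) - 1 ≠ 0 := by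
      have h2d : (2 : ℝ) ≤ (d : ℝ) := by exact_mod_cast hd
      linarith
    rw [hLHS, hJ]
    field_simp
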